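/- Let p, d be positive integers and let η = (η_1, …, η_d) : ℝ^p → [0,∞)^d be continuous. Set Λ̃ := {λ ∈ ℝ^p : η_j(λ) > 0 for all j}, and assume Λ̃ is dense in ℝ^p. For λ ∈ ℝ^p and 1 ≤ j ≤ d define g_j(λ) ⊆ [0,∞) × ℤ by: g_j(λ) := {(a,b) : (a + η_j(λ)b)/2 ∈ η_j(λ)·ℕ and (a − η_j(λ)b)/2 ∈ η_j(λ)·ℕ} if η_j(λ) > 0, and g_j(λ) := [0,∞) × ℤ if η_j(λ) = 0; set g(λ) := ∏_{j=1}^d g_j(λ) ⊆ [0,∞)^d × ℤ^d (after reordering coordinates). Then the closure, for the Euclidean distance on ℝ^d × ℤ^d × ℝ^p, of the set g̃ := ⋃_{λ ∈ Λ̃} g(λ) × {λ} is exactly the set ĝ := ⋃_{λ ∈ ℝ^p} g(λ) × {λ}. -/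

import Mathlib

/-- The comb condition defining `g_j(λ)`: if `e = η_j(λ) = 0` it is just `0 ≤ a`,
otherwise it asks `(a ± e b)/2 ∈ e·ℕ`. -/
def combCond (e a : ℝ) (b : ℤ) : Prop :=
  0 ≤ a ∧ (e = 0 ∨
    ((∃ n : ℕ, (a + e * b) / 2 = e * n) ∧ (∃ n : ℕ, (a - e * b) / 2 = e * n)))

lemma combCond_iff {e : ℝ} (he : 0 ≤ e) (a : ℝ) (b : ℤ) :
    combCond e a b ↔ 0 ≤ a ∧ (e = 0 ∨
      ∃ m n : ℕ, a = e * ((m : ℝ) + n) ∧ b = (m : ℤ) - n) := by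
  unfold combCond
  constructor
  · rintro ⟨ha, h⟩
    refine ⟨ha, ?_⟩
    rcases h with h | ⟨⟨m, hm⟩, ⟨n, hn⟩⟩
    · exact Or.inl h
    rcases eq_or_lt_of_le he with he0 | he0
    · exact Or.inl he0.symm
    right
    refine ⟨m, n, by linarith, ?_⟩
    have h2 : e * (b : ℝ) = e * ((m : ℝ) - n) := by linarith
    have h3 : (b : ℝ) = (m : ℝ) - n := mul_left_cancel₀ (ne_of_gt he0) h2
    exact_mod_cast h3
  · rintro ⟨ha, h⟩
    refine ⟨ha, ?_⟩
    rcases h with h | ⟨m, n, ham, hb⟩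
    · exact Or.inl h
    right
    have hb' : (b : ℝ) = (m : ℝ) - n := by exact_mod_cast hb
    exact ⟨⟨m, by rw [ham, hb']; ring⟩, ⟨n, by rw [ham, hb']; ring⟩⟩

lemma freq_pigeonhole {α : Type*} {F : Finset α} {Q : α → ℕ → Prop}
    (h : ∀ᶠ k in Filter.atTop, ∃ q ∈ F, Q q k) :
    ∃ q ∈ F, ∃ᶠ k in Filter.atTop, Q q k := by
  by_contra hc
  push_neg at hc
  have h2 : ∀ᶠ k in Filter.atTop, ∀ q ∈ F, ¬ Q q k := (Filter.eventually_all_finset F).2 hc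
  rcases (h2.and h).exists with ⟨k, h1, q, hq, h3⟩
  exact h1 q hq h3

/-- The closure of `g̃ = ⋃_{λ ∈ Λ̃} g(λ) × {λ}` in `ℝ^d × ℤ^d × ℝ^p`
is `ĝ = ⋃_{λ ∈ ℝ^p} g(λ) × {λ}`. -/
theorem closure_frequency_space (p d : ℕ) (hp : 0 < p) (hd : 0 < d)
    (η : (Fin p → ℝ) → Fin d → ℝ)
    (hcont : Continuous η)
    (hnn : ∀ lam j, 0 ≤ η lam j)
    (hdense : Dense {lam : Fin p → ℝ | ∀ j, 0 < η lam j}) :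
    closure {x : (Fin d → ℝ) × (Fin d → ℤ) × (Fin p → ℝ) |
        (∀ j, 0 < η x.2.2 j) ∧ ∀ j, combCond (η x.2.2 j) (x.1 j) (x.2.1 j)} =
      {x : (Fin d → ℝ) × (Fin d → ℤ) × (Fin p → ℝ) |
        ∀ j, combCond (η x.2.2 j) (x.1 j) (x.2.1 j)} := by
  classical
  have hη : ∀ j, Continuous fun lam => η lam j := fun j => (continuous_apply j).comp hcont
  apply Set.Subset.antisymm
  · -- closure A ⊆ B : B is closed and contains A
    apply closure_minimal (fun x hx => hx.2)
    apply IsSeqClosed.isClosed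
    intro f x hf hfx j
    have hlam0 : Filter.Tendsto (fun k => (f k).2.2) Filter.atTop (nhds x.2.2) :=
      ((continuous_snd.comp continuous_snd).tendsto x).comp hfx
    have he : Filter.Tendsto (fun k => η (f k).2.2 j) Filter.atTop (nhds (η x.2.2 j)) :=
      ((hη j).tendsto _).comp hlam0
    have ha : Filter.Tendsto (fun k => (f k).1 j) Filter.atTop (nhds (x.1 j)) :=
      (((continuous_apply j).comp continuous_fst).tendsto x).comp hfx
    have hb : Filter.Tendsto (fun k => (f k).2.1) Filter.atTop (nhds x.2.1) :=
      ((continuous_fst.comp continuous_snd).tendsto x).comp hfx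
    have hbconst : ∀ᶠ k in Filter.atTop, (f k).2.1 = x.2.1 := by
      rw [nhds_discrete] at hb
      exact Filter.tendsto_pure.1 hb
    have ha0 : 0 ≤ x.1 j := ge_of_tendsto ha (Filter.Eventually.of_forall fun k => (hf k j).1)
    rw [combCond_iff (hnn _ j)]
    refine ⟨ha0, ?_⟩
    rcases eq_or_lt_of_le (hnn x.2.2 j) with h0 | hpos
    · exact Or.inl h0.symm
    right
    have hev1 : ∀ᶠ k in Filter.atTop, η x.2.2 j / 2 < η (f k).2.2 j :=
      he.eventually (eventually_gt_nhds (by linarith))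
    have hev2 : ∀ᶠ k in Filter.atTop, (f k).1 j < x.1 j + 1 :=
      ha.eventually (eventually_lt_nhds (by linarith))
    set M : ℕ := ⌈(x.1 j + 1) / (η x.2.2 j / 2)⌉₊ with hM
    have key : ∀ᶠ k in Filter.atTop, ∃ q ∈ Finset.range (M+1) ×ˢ Finset.range (M+1),
        (f k).1 j = η (f k).2.2 j * ((q.1 : ℝ) + q.2) ∧ x.2.1 j = (q.1 : ℤ) - q.2 := by
      filter_upwards [hev1, hev2, hbconst] with k h1 h2 h3
      have hc := (combCond_iff (hnn _ j) _ _).1 (hf k j)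
      rcases hc.2 with h0' | ⟨m, n, ham, hbm⟩
      · exfalso; linarith
      refine ⟨(m, n), ?_, ham, by rw [← h3]; exact hbm⟩
      have hmn : ((m : ℝ) + n) * (η x.2.2 j / 2) ≤ (f k).1 j := by
        rw [ham]
        have : ((m : ℝ) + n) ≥ 0 := by positivity
        nlinarith
      have hMle : (x.1 j + 1) / (η x.2.2 j / 2) ≤ (M : ℝ) := Nat.le_ceil _
      have hdiv : ((m : ℝ) + n) ≤ (x.1 j + 1) / (η x.2.2 j / 2) := by
        rw [le_div_iff₀ (by linarith)]
        linarith
      have hcast : ((m : ℝ) + n) ≤ (M : ℝ) := le_trans hdiv hMle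
      have hmnM : m + n ≤ M := by exact_mod_cast hcast
      simp only [Finset.mem_product, Finset.mem_range]
      omega
    obtain ⟨q, hqF, hq⟩ := freq_pigeonhole key
    refine ⟨q.1, q.2, ?_, ?_⟩
    · have hclosed : IsClosed {y : ℝ × ℝ | y.2 = y.1 * ((q.1 : ℝ) + q.2)} :=
        isClosed_eq continuous_snd (continuous_fst.mul continuous_const)
      have htend : Filter.Tendsto (fun k => (η (f k).2.2 j, (f k).1 j)) Filter.atTop
          (nhds (η x.2.2 j, x.1 j)) := he.prodMk_nhds ha
      have hfreq : ∃ᶠ k in Filter.atTop,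
          (η (f k).2.2 j, (f k).1 j) ∈ {y : ℝ × ℝ | y.2 = y.1 * ((q.1 : ℝ) + q.2)} :=
        hq.mono fun k hk => hk.1
      have := mem_closure_of_frequently_of_tendsto hfreq htend
      rwa [hclosed.closure_eq] at this
    · obtain ⟨k, hk⟩ := hq.exists
      exact hk.2
  · -- B ⊆ closure A
    intro x hx
    rw [Metric.mem_closure_iff]
    intro ε hε
    have hdat : ∀ j, 0 ≤ x.1 j ∧ (η x.2.2 j = 0 ∨
        ∃ m n : ℕ, x.1 j = η x.2.2 j * ((m : ℝ) + n) ∧ x.2.1 j = (m : ℤ) - n) :=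
      fun j => (combCond_iff (hnn _ j) _ _).1 (hx j)
    -- choose decomposition data for indices with positive η
    have hmn : ∀ j, ∃ mn : ℕ × ℕ, η x.2.2 j ≠ 0 →
        (x.1 j = η x.2.2 j * ((mn.1 : ℝ) + mn.2) ∧ x.2.1 j = (mn.1 : ℤ) - mn.2) := by
      intro j
      by_cases h : η x.2.2 j = 0
      · exact ⟨(0, 0), fun h' => absurd h h'⟩
      · rcases (hdat j).2 with h0 | ⟨m, n, h1, h2⟩
        · exact absurd h0 h
        · exact ⟨(m, n), fun _ => ⟨h1, h2⟩⟩
    choose mn hmnspec using hmn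
    set s : Fin d → ℕ := fun j => (mn j).1 + (mn j).2 + (x.2.1 j).natAbs + 3 with hs
    have hsval : ∀ j, s j = (mn j).1 + (mn j).2 + (x.2.1 j).natAbs + 3 := fun j => rfl
    have hspos : ∀ j, (0 : ℝ) < s j := by
      intro j; have h3 : (3 : ℕ) ≤ s j := by rw [hsval]; omega
      exact_mod_cast lt_of_lt_of_le (by norm_num) h3
    -- the open set of parameters
    set U : Set (Fin p → ℝ) := Metric.ball x.2.2 (ε / 2) ∩
        ⋂ j, (fun l => η l j) ⁻¹' Metric.ball (η x.2.2 j) (ε / s j) with hU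
    have hUopen : IsOpen U :=
      (Metric.isOpen_ball).inter (isOpen_iInter_of_finite fun j =>
        (Metric.isOpen_ball).preimage (hη j))
    have hxU : x.2.2 ∈ U := by
      constructor
      · exact Metric.mem_ball_self (by linarith)
      · exact Set.mem_iInter.2 fun j => Metric.mem_ball_self (div_pos hε (hspos j))
    obtain ⟨lam', hlam'S, hlam'U⟩ := hdense.exists_mem_open hUopen ⟨x.2.2, hxU⟩
    have hlam'ball : dist lam' x.2.2 < ε / 2 := hlam'U.1
    have hlam'e : ∀ j, |η lam' j - η x.2.2 j| < ε / s j := by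
      intro j
      have := Set.mem_iInter.1 hlam'U.2 j
      simpa [Real.dist_eq] using this
    have hlam'pos : ∀ j, 0 < η lam' j := hlam'S
    -- define the approximating a'
    set a' : Fin d → ℝ := fun j =>
      if η x.2.2 j = 0 then
        η lam' j * (((x.2.1 j).natAbs : ℝ) + 2 * ⌈x.1 j / (2 * η lam' j)⌉₊)
      else η lam' j * (((mn j).1 : ℝ) + (mn j).2) with ha'
    have claims : ∀ j, combCond (η lam' j) (a' j) (x.2.1 j) ∧ |a' j - x.1 j| < ε := by
      intro j
      have he' : 0 < η lam' j := hlam'pos j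
      by_cases h : η x.2.2 j = 0
      · -- η x λ j = 0 case
        set e' := η lam' j with he'def
        set k := ⌈x.1 j / (2 * e')⌉₊ with hk
        set B := (x.2.1 j).natAbs with hB
        have ha'j : a' j = e' * ((B : ℝ) + 2 * k) := by simp only [ha', if_pos h]; rfl
        have he'small : e' < ε / s j := by
          have := hlam'e j
          rw [h, sub_zero, abs_of_pos he'] at this
          exact this
        have hax : 0 ≤ x.1 j := (hdat j).1
        have hk1 : x.1 j / (2 * e') ≤ (k : ℝ) := Nat.le_ceil _
        have hk2 : (k : ℝ) < x.1 j / (2 * e') + 1 :=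
          Nat.ceil_lt_add_one (by positivity)
        have h2e : (0 : ℝ) < 2 * e' := by linarith
        have hk1' : x.1 j ≤ 2 * e' * k := by
          rw [div_le_iff₀ h2e] at hk1; linarith
        have hk2' : 2 * e' * k < x.1 j + 2 * e' := by
          have hxx : x.1 j / (2 * e') * (2 * e') = x.1 j := div_mul_cancel₀ _ (ne_of_gt h2e)
          nlinarith
        constructor
        · rw [combCond_iff (le_of_lt he')]
          refine ⟨by rw [ha'j]; positivity, Or.inr
            ⟨(x.2.1 j).toNat + k, (-(x.2.1 j)).toNat + k, ?_, ?_⟩⟩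
          · rw [ha'j]
            have hnatabs : ((x.2.1 j).toNat + (-(x.2.1 j)).toNat : ℕ) = B :=
              Int.toNat_add_toNat_neg_eq_natAbs _
            have h4 : (B : ℝ) = ((x.2.1 j).toNat : ℝ) + ((-(x.2.1 j)).toNat : ℝ) := by
              exact_mod_cast hnatabs.symm
            rw [h4]; push_cast; ring
          · have := Int.toNat_sub_toNat_neg (x.2.1 j)
            push_cast
            omega
        · -- distance bound
          have hsB : ((B : ℝ) + 3) ≤ (s j : ℝ) := by
            have h5 : B + 3 ≤ s j := by rw [hsval]; omega
            exact_mod_cast h5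
          have hes : e' * s j < ε := (lt_div_iff₀ (hspos j)).1 he'small
          have hbd : e' * ((B : ℝ) + 2) < ε := by
            nlinarith [he'.le, hspos j]
          rw [ha'j, abs_lt]
          constructor <;> nlinarith [mul_nonneg he'.le (Nat.cast_nonneg B)]
      · -- η x λ j > 0 case
        obtain ⟨h1, h2⟩ := hmnspec j h
        set m := (mn j).1; set n := (mn j).2
        have ha'j : a' j = η lam' j * ((m : ℝ) + n) := by simp only [ha', if_neg h]; rfl
        constructor
        · rw [combCond_iff (le_of_lt he')]
          exact ⟨by rw [ha'j]; positivity, Or.inr ⟨m, n, ha'j, h2⟩⟩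
        · have hsm : ((m : ℝ) + n + 3) ≤ (s j : ℝ) := by
            have h6 : s j = m + n + (x.2.1 j).natAbs + 3 := rfl
            have : m + n + 3 ≤ s j := by omega
            exact_mod_cast this
          have hee : |η lam' j - η x.2.2 j| < ε / s j := hlam'e j
          have hes : |η lam' j - η x.2.2 j| * (s j : ℝ) < ε := by
            rw [lt_div_iff₀ (hspos j)] at hee
            exact hee
          have : |a' j - x.1 j| = |η lam' j - η x.2.2 j| * ((m : ℝ) + n) := by
            rw [ha'j, h1, ← sub_mul, abs_mul, abs_of_nonneg (by positivity : (0:ℝ) ≤ (m : ℝ) + n)]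
          rw [this]
          nlinarith [abs_nonneg (η lam' j - η x.2.2 j), hspos j]
    refine ⟨(a', x.2.1, lam'), ⟨hlam'pos, fun j => (claims j).1⟩, ?_⟩
    rw [Prod.dist_eq]
    apply max_lt
    · rw [dist_pi_lt_iff hε]
      intro j
      rw [Real.dist_eq, abs_sub_comm]
      exact (claims j).2
    · rw [Prod.dist_eq]
      apply max_lt
      · simp [hε]
      · rw [dist_comm]
        linarith [hlam'ball]
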